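/- arXiv:1401.7927 — 2 statements merged into one kernel-verified Lean document; each statement's English description precedes it below -/
import Mathlib

section
/- Let D be a subset of ℤ² with the 2ℤ-property, i.e., every point (m,n) ∈ ℤ² with m even belongs to D. Let f : D → ℤ² be L-bi-Lipschitz (for the Euclidean metric), meaning ‖x-y‖/L ≤ ‖f(x)-f(y)‖ ≤ L‖x-y‖ for all x,y ∈ D. Define the extension f̂ : ℤ² → (1/2)ℤ² by f̂(x) = f(x) if x ∈ D, and f̂(x) = f(x+(1,0)) - (1/2, 0) if x ∉ D. Then f̂ is 6L-bi-Lipschitz. -/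
noncomputable def e2 (p : ℤ × ℤ) : EuclideanSpace ℝ (Fin 2) := WithLp.toLp 2 ![(p.1 : ℝ), (p.2 : ℝ)]

lemma e2_sub (p q : ℤ × ℤ) : e2 p - e2 q = e2 (p - q) := by
  ext i; fin_cases i <;> simp [e2]

lemma norm_e2 (p : ℤ × ℤ) : ‖e2 p‖ = Real.sqrt ((p.1:ℝ)^2 + (p.2:ℝ)^2) := by
  rw [EuclideanSpace.norm_eq]
  simp [e2, Fin.sum_univ_two, sq_abs]

lemma sq_int (a : ℤ) (h : a ≠ 0) : (1:ℝ) ≤ (a:ℝ)^2 := by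
  have h1 : (1:ℝ) ≤ |(a:ℝ)| := by exact_mod_cast Int.one_le_abs h
  nlinarith [abs_nonneg (a:ℝ), sq_abs (a:ℝ)]

lemma one_le_norm_e2 (p : ℤ × ℤ) (hp : p ≠ 0) : 1 ≤ ‖e2 p‖ := by
  rw [norm_e2]
  have h : (1:ℝ) ≤ (p.1:ℝ)^2 + (p.2:ℝ)^2 := by
    rcases (by rcases p with ⟨a,b⟩; simp [Prod.ext_iff] at hp; tauto : p.1 ≠ 0 ∨ p.2 ≠ 0) with h | h
    · nlinarith [sq_int p.1 h, sq_nonneg (p.2:ℝ)]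
    · nlinarith [sq_int p.2 h, sq_nonneg (p.1:ℝ)]
  calc (1:ℝ) = Real.sqrt 1 := (Real.sqrt_one).symm
  _ ≤ _ := Real.sqrt_le_sqrt h

lemma norm_e2_one : ‖e2 (1,0)‖ = 1 := by
  rw [norm_e2]; norm_num

theorem stmt0 (L : ℝ) (hL : 1 ≤ L) (D : Set (ℤ × ℤ))
    (hD : ∀ m n : ℤ, Even m → (m, n) ∈ D)
    (f : ℤ × ℤ → ℤ × ℤ)
    (hf : ∀ x ∈ D, ∀ y ∈ D,
      ‖e2 x - e2 y‖ / L ≤ ‖e2 (f x) - e2 (f y)‖ ∧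
      ‖e2 (f x) - e2 (f y)‖ ≤ L * ‖e2 x - e2 y‖)
    (fhat : ℤ × ℤ → EuclideanSpace ℝ (Fin 2))
    (hfhat₁ : ∀ x ∈ D, fhat x = e2 (f x))
    (hfhat₂ : ∀ x ∉ D, fhat x = e2 (f (x + (1, 0))) - (1 / 2 : ℝ) • e2 (1, 0)) :
    ∀ x y : ℤ × ℤ,
      ‖e2 x - e2 y‖ / (6 * L) ≤ ‖fhat x - fhat y‖ ∧
      ‖fhat x - fhat y‖ ≤ 6 * L * ‖e2 x - e2 y‖ := by
  have hL0 : (0:ℝ) < L := by linarith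
  have hmemD : ∀ x : ℤ × ℤ, x ∉ D → x + (1,0) ∈ D := by
    intro x hx
    have hodd : ¬ Even x.1 := fun h => hx (by simpa using hD x.1 x.2 h)
    have hrw : (x + ((1:ℤ),(0:ℤ))) = (x.1 + 1, x.2) := by cases x; simp [Prod.ext_iff]
    rw [hrw]
    exact hD _ _ (Int.even_add_one.mpr hodd)
  have key : ∀ x ∉ D, ∀ y ∈ D,
      ‖e2 x - e2 y‖ / (6 * L) ≤ ‖fhat x - fhat y‖ ∧
      ‖fhat x - fhat y‖ ≤ 6 * L * ‖e2 x - e2 y‖ := by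
    intro x hx y hy
    have hx' : x + (1,0) ∈ D := hmemD x hx
    set x' := x + ((1:ℤ),(0:ℤ)) with hx'def
    set d := ‖e2 x - e2 y‖ with hddef
    set A := ‖e2 (f x') - e2 (f y)‖ with hAdef
    set d' := ‖e2 x' - e2 y‖ with hd'def
    have hxy : x ≠ y := fun h => hx (h ▸ hy)
    have hd1 : 1 ≤ d := by
      rw [hddef, e2_sub]
      exact one_le_norm_e2 _ (sub_ne_zero.mpr hxy)
    obtain ⟨hAlow, hAup⟩ := hf x' hx' y hy
    have hAlow' : d' ≤ A * L := (div_le_iff₀ hL0).mp hAlow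
    have hA01 : A = 0 ∨ 1 ≤ A := by
      by_cases h : f x' = f y
      · left; simp [hAdef, h]
      · right; rw [hAdef, e2_sub]; exact one_le_norm_e2 _ (sub_ne_zero.mpr h)
    have hxx' : e2 x' - e2 x = e2 (1,0) := by
      rw [e2_sub, hx'def, add_sub_cancel_left]
    have hd'up : d' ≤ d + 1 := by
      have he : e2 x' - e2 y = (e2 x - e2 y) + e2 (1,0) := by rw [← hxx']; abel
      rw [hd'def, he]
      calc ‖(e2 x - e2 y) + e2 (1,0)‖ ≤ ‖e2 x - e2 y‖ + ‖e2 (1,0)‖ := norm_add_le _ _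
      _ = d + 1 := by rw [norm_e2_one]
    have hd'low : d - 1 ≤ d' := by
      have he : e2 x - e2 y = (e2 x' - e2 y) - e2 (1,0) := by rw [← hxx']; abel
      have : d ≤ d' + 1 := by
        rw [hddef, he]
        calc ‖(e2 x' - e2 y) - e2 (1,0)‖ ≤ ‖e2 x' - e2 y‖ + ‖e2 (1,0)‖ := norm_sub_le _ _
        _ = d' + 1 := by rw [norm_e2_one]
      linarith
    rw [hfhat₂ x hx, hfhat₁ y hy]
    set v := (1/2:ℝ) • e2 (1,0) with hvdef
    have hv : ‖v‖ = 1/2 := by rw [hvdef, norm_smul, norm_e2_one]; norm_num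
    have hre : e2 (f x') - v - e2 (f y) = (e2 (f x') - e2 (f y)) - v := by abel
    rw [hre]
    set N := ‖(e2 (f x') - e2 (f y)) - v‖ with hNdef
    have hN1 : A - 1/2 ≤ N := by
      have := norm_sub_norm_le (e2 (f x') - e2 (f y)) v
      rw [hv] at this; linarith
    have hN2 : N ≤ A + 1/2 := by
      have := norm_sub_le (e2 (f x') - e2 (f y)) v
      rw [hv] at this; linarith
    have hN3 : 1/2 - A ≤ N := by
      have := norm_sub_norm_le v (e2 (f x') - e2 (f y))
      rw [hv, norm_sub_rev v] at this; linarith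
    have hNhalf : 1/2 ≤ N := by rcases hA01 with h | h <;> linarith
    constructor
    · rw [div_le_iff₀ (by positivity)]
      by_cases hcase : d ≤ 3 * L
      · nlinarith
      · push_neg at hcase
        nlinarith [mul_le_mul_of_nonneg_left hN1 hL0.le]
    · nlinarith
  intro x y
  by_cases hx : x ∈ D <;> by_cases hy : y ∈ D
  · rw [hfhat₁ x hx, hfhat₁ y hy]
    obtain ⟨h1, h2⟩ := hf x hx y hy
    have hd0 : 0 ≤ ‖e2 x - e2 y‖ := norm_nonneg _
    constructor
    · calc ‖e2 x - e2 y‖/(6*L) ≤ ‖e2 x - e2 y‖/L := by gcongr; linarith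
      _ ≤ _ := h1
    · nlinarith
  · have h := key y hy x hx
    rwa [norm_sub_rev (e2 y), norm_sub_rev (fhat y)] at h
  · exact key x hx y hy
  · rw [hfhat₂ x hx, hfhat₂ y hy]
    have hre : e2 (f (x+(1,0))) - (1/2:ℝ) • e2 (1,0) - (e2 (f (y+(1,0))) - (1/2:ℝ) • e2 (1,0))
        = e2 (f (x+(1,0))) - e2 (f (y+(1,0))) := by abel
    rw [hre]
    obtain ⟨h1, h2⟩ := hf _ (hmemD x hx) _ (hmemD y hy)
    have heq : ‖e2 (x+(1,0)) - e2 (y+(1,0))‖ = ‖e2 x - e2 y‖ := by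
      rw [e2_sub, e2_sub]; congr 2; abel
    rw [heq] at h1 h2
    have hd0 : 0 ≤ ‖e2 x - e2 y‖ := norm_nonneg _
    constructor
    · calc ‖e2 x - e2 y‖/(6*L) ≤ ‖e2 x - e2 y‖/L := by gcongr; linarith
      _ ≤ _ := h1
    · nlinarith
end

section
/- Let γ be a rectifiable curve in ℝ² with length(γ) ≥ 4, and let T be a real number with 1 ≤ T ≤ length(γ)/4. Then the number of lattice points x ∈ ℤ² with dist(x, γ) ≤ T is at most 25 · T · length(γ). -/
open Set ENNReal

lemma var_right {E : Type*} [PseudoEMetricSpace E] (f : ℝ → E) {a b : ℝ} (hab : a < b)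
    (hfin : eVariationOn f (Set.Icc a b) ≠ ⊤)
    (hcont : ContinuousWithinAt f (Set.Icc a b) a)
    {ε : ℝ≥0∞} (hε : 0 < ε) (hεt : ε ≠ ⊤) :
    ∃ t ∈ Set.Ioc a b, eVariationOn f (Set.Icc a t) ≤ 3 * ε := by
  set J : ℝ≥0∞ := ⨅ t : Set.Ioc a b, eVariationOn f (Set.Icc a (t : ℝ)) with hJ
  have hJle : ∀ t ∈ Set.Ioc a b, J ≤ eVariationOn f (Set.Icc a t) := by
    intro t ht
    exact iInf_le_of_le ⟨t, ht⟩ le_rfl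
  have hJfin : J ≠ ⊤ := by
    intro h
    have := hJle b ⟨hab, le_rfl⟩
    rw [h] at this
    exact hfin (top_le_iff.mp this)
  -- choose t' with variation < J + ε
  have hlt : J < J + ε := ENNReal.lt_add_right hJfin hε.ne'
  obtain ⟨⟨t', ht'⟩, ht'var⟩ : ∃ t : Set.Ioc a b, eVariationOn f (Set.Icc a (t : ℝ)) < J + ε := by
    rw [hJ] at hlt
    exact iInf_lt_iff.mp hlt
  -- continuity: δ-ball where edist < ε
  have hev : ∀ᶠ x in nhdsWithin a (Set.Icc a b), edist (f x) (f a) < ε := by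
    have := hcont
    rw [ContinuousWithinAt] at this
    exact this (EMetric.ball_mem_nhds _ hε)
  obtain ⟨δ, hδ, hball⟩ := Metric.mem_nhdsWithin_iff.mp hev
  set t₁ : ℝ := min t' (min (a + δ / 2) b) with ht₁def
  have ht₁a : a < t₁ := lt_min ht'.1 (lt_min (by linarith) hab)
  have ht₁b : t₁ ≤ b := le_trans (min_le_right _ _) (min_le_right _ _)
  have ht₁t' : t₁ ≤ t' := min_le_left _ _
  have hsmall : ∀ x ∈ Set.Icc a t₁, edist (f x) (f a) < ε := by
    intro x hx
    apply hball
    constructor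
    · rw [Metric.mem_ball, Real.dist_eq, abs_of_nonneg (by linarith [hx.1])]
      have : t₁ ≤ a + δ / 2 := le_trans (min_le_right _ _) (min_le_left _ _)
      linarith [hx.2]
    · exact ⟨hx.1, le_trans hx.2 ht₁b⟩
  refine ⟨t₁, ⟨ht₁a, ht₁b⟩, ?_⟩
  set V : ℝ≥0∞ := eVariationOn f (Set.Icc a t₁) with hV
  have hVfin : V ≠ ⊤ := fun h => hfin (top_le_iff.mp (h ▸ eVariationOn.mono f (Set.Icc_subset_Icc le_rfl ht₁b)))
  have hVlt : V < J + ε :=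
    lt_of_le_of_lt (eVariationOn.mono f (Set.Icc_subset_Icc le_rfl ht₁t')) ht'var
  by_contra hV3
  push_neg at hV3
  have hVε : ε < V := lt_of_le_of_lt (le_mul_of_one_le_left zero_le (by norm_num)) hV3
  have hV0 : V ≠ 0 := fun h => by simp [h] at hVε
  -- extract near-optimal partition
  have hsub : V - ε < V := ENNReal.sub_lt_self hVfin hV0 hε.ne'
  obtain ⟨⟨n, u, hu, us⟩, hsum⟩ :
      ∃ p : ℕ × { u : ℕ → ℝ // Monotone u ∧ ∀ i, u i ∈ Set.Icc a t₁ },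
        V - ε < ∑ i ∈ Finset.range p.1, edist (f (p.2.1 (i + 1))) (f (p.2.1 i)) := by
    rw [hV, eVariationOn] at hsub ⊢
    exact lt_iSup_iff.mp hsub
  -- least index strictly above a
  by_cases hex : ∃ i, a < u i
  · set m := Nat.find hex with hm
    have hum : a < u m := Nat.find_spec hex
    have hlt_m : ∀ i, i < m → u i = a := by
      intro i hi
      have := Nat.find_min hex hi
      push_neg at this
      exact le_antisymm this (us i).1
    have humt : u m ∈ Set.Icc a t₁ := us m
    -- key: variation from u m to t₁ is small
    have hkey : eVariationOn f (Set.Icc (u m) t₁) ≤ ε := by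
      have hsplit : eVariationOn f (Set.Icc a (u m)) + eVariationOn f (Set.Icc (u m) t₁)
          = eVariationOn f (Set.Icc a t₁) := by
        have := eVariationOn.Icc_add_Icc f (s := Set.Icc a t₁) humt.1 humt.2
          (⟨humt.1, humt.2⟩ : u m ∈ Set.Icc a t₁)
        rwa [Set.inter_eq_self_of_subset_right (Set.Icc_subset_Icc le_rfl humt.2),
          Set.inter_eq_self_of_subset_right (Set.Icc_subset_Icc humt.1 le_rfl),
          Set.inter_self] at this
      have hJm : J ≤ eVariationOn f (Set.Icc a (u m)) := hJle _ ⟨hum, le_trans humt.2 ht₁b⟩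
      have h1 : eVariationOn f (Set.Icc a (u m)) + eVariationOn f (Set.Icc (u m) t₁)
          ≤ eVariationOn f (Set.Icc a (u m)) + ε := by
        rw [hsplit]
        calc V ≤ J + ε := hVlt.le
        _ ≤ eVariationOn f (Set.Icc a (u m)) + ε := add_le_add_left hJm _
      have hfin2 : eVariationOn f (Set.Icc a (u m)) ≠ ⊤ := by
        intro h
        apply hVfin
        rw [hV, ← hsplit, h, top_add]
      exact (ENNReal.add_le_add_iff_left hfin2).mp h1
    -- bound the sum
    have hbnd : ∑ i ∈ Finset.range n, edist (f (u (i + 1))) (f (u i)) ≤ ε + ε := by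
      rcases le_or_gt m n with hmn | hmn
      · -- split range n at m
        rw [Finset.range_eq_Ico, ← Finset.sum_Ico_consecutive _ (Nat.zero_le m) hmn]
        have hA : ∑ i ∈ Finset.Ico 0 m, edist (f (u (i + 1))) (f (u i)) ≤ ε := by
          rcases Nat.eq_zero_or_pos m with hm0 | hm0
          · simp [hm0]
          · rw [← Nat.succ_pred_eq_of_pos hm0, Finset.sum_Ico_succ_top (Nat.zero_le _)]
            simp only [Nat.pred_eq_sub_one]
            have hz : ∑ i ∈ Finset.Ico 0 (m - 1), edist (f (u (i + 1))) (f (u i)) = 0 := by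
              apply Finset.sum_eq_zero
              intro i hi
              rw [Finset.mem_Ico] at hi
              have h1 : u i = a := hlt_m i (by omega)
              have h2 : u (i + 1) = a := hlt_m (i + 1) (by omega)
              rw [h1, h2, edist_self]
            rw [hz, zero_add, hlt_m (m-1) (by omega)]
            have hmm : m - 1 + 1 = m := by omega
            rw [hmm]
            exact (hsmall (u m) humt).le
        have hB : ∑ i ∈ Finset.Ico m n, edist (f (u (i + 1))) (f (u i)) ≤ ε := by
          refine le_trans ?_ hkey
          have := eVariationOn.sum_le (f := f) (n := n - m) (u := fun j => u (m + j))
            (fun i j hij => hu (by omega)) (fun j => Set.mem_Icc.mpr ⟨hu (Nat.le_add_right m j), (us (m + j)).2⟩)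
          rw [Finset.sum_Ico_eq_sum_range]
          simpa only [← Nat.add_assoc] using this
        exact add_le_add hA hB
      · -- m > n : all points up to n equal a
        have hz : ∑ i ∈ Finset.range n, edist (f (u (i + 1))) (f (u i)) = 0 := by
          apply Finset.sum_eq_zero
          intro i hi
          rw [Finset.mem_range] at hi
          rw [hlt_m i (by omega), hlt_m (i + 1) (by omega), edist_self]
        rw [hz]
        exact zero_le
    have : V - ε < ε + ε := lt_of_lt_of_le hsum hbnd
    have : V < 3 * ε := by
      have h3 : V ≤ (V - ε) + ε := le_tsub_add
      calc V ≤ (V - ε) + ε := h3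
      _ < (ε + ε) + ε := by exact ENNReal.add_lt_add_right hεt this
      _ = 3 * ε := by ring
    exact (lt_irrefl _ (hV3.trans this)).elim
  · -- all u i = a, sum is zero: contradiction
    push_neg at hex
    have hz : ∑ i ∈ Finset.range n, edist (f (u (i + 1))) (f (u i)) = 0 := by
      apply Finset.sum_eq_zero
      intro i _
      have h1 : u i = a := le_antisymm (hex i) (us i).1
      have h2 : u (i + 1) = a := le_antisymm (hex (i + 1)) (us (i + 1)).1
      rw [h1, h2, edist_self]
    rw [hz] at hsum
    exact absurd hsum (by simp)

lemma var_left {E : Type*} [PseudoEMetricSpace E] (f : ℝ → E) {a b : ℝ} (hab : a < b)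
    (hfin : eVariationOn f (Set.Icc a b) ≠ ⊤)
    (hcont : ContinuousWithinAt f (Set.Icc a b) b)
    {ε : ℝ≥0∞} (hε : 0 < ε) (hεt : ε ≠ ⊤) :
    ∃ t ∈ Set.Ico a b, eVariationOn f (Set.Icc t b) ≤ 3 * ε := by
  set φ : ℝ → ℝ := fun x => a + b - x with hφ
  have hφanti : ∀ s : Set ℝ, AntitoneOn φ s := fun s x _ y _ hxy => by simp [hφ]; linarith
  have hφimg : ∀ c d : ℝ, φ '' Set.Icc c d = Set.Icc (a + b - d) (a + b - c) := by
    intro c d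
    have : φ = (fun x => a + b - x) := rfl
    rw [this, Set.image_const_sub_Icc]
  have hgvar : ∀ c d : ℝ, eVariationOn (f ∘ φ) (Set.Icc c d)
      = eVariationOn f (Set.Icc (a + b - d) (a + b - c)) := by
    intro c d
    rw [eVariationOn.comp_eq_of_antitoneOn f φ (hφanti _), hφimg]
  have hgfin : eVariationOn (f ∘ φ) (Set.Icc a b) ≠ ⊤ := by
    rw [hgvar]
    have : a + b - b = a := by ring
    have h2 : a + b - a = b := by ring
    rw [this, h2]
    exact hfin
  have hgcont : ContinuousWithinAt (f ∘ φ) (Set.Icc a b) a := by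
    have hφc : ContinuousWithinAt φ (Set.Icc a b) a := (continuous_const.sub continuous_id).continuousWithinAt
    have hφa : φ a = b := by simp [hφ]
    have hmaps : Set.MapsTo φ (Set.Icc a b) (Set.Icc a b) := by
      intro x hx
      simp only [hφ, Set.mem_Icc] at hx ⊢
      constructor <;> linarith [hx.1, hx.2]
    exact ContinuousWithinAt.comp (t := Set.Icc a b) (by rw [hφa]; exact hcont) hφc hmaps
  obtain ⟨t', ht', hvar⟩ := var_right (f ∘ φ) hab hgfin hgcont hε hεt
  refine ⟨a + b - t', ⟨by linarith [ht'.2], by linarith [ht'.1]⟩, ?_⟩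
  rw [hgvar] at hvar
  have : a + b - a = b := by ring
  rw [this] at hvar
  exact hvar

lemma variation_fun_continuousOn {E : Type*} [PseudoEMetricSpace E] (f : ℝ → E)
    (hcont : ContinuousOn f (Set.Icc 0 1))
    (hfin : eVariationOn f (Set.Icc 0 1) ≠ ⊤) :
    ContinuousOn (fun t => (eVariationOn f (Set.Icc 0 t)).toReal) (Set.Icc 0 1) := by
  set V : ℝ → ℝ := fun t => (eVariationOn f (Set.Icc 0 t)).toReal with hVdef
  have hfinany : ∀ {s t : ℝ}, 0 ≤ s → t ≤ 1 → eVariationOn f (Set.Icc s t) ≠ ⊤ := by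
    intro s t hs ht h
    exact hfin (top_le_iff.mp (h ▸ eVariationOn.mono f (Set.Icc_subset_Icc hs ht)))
  have hadd : ∀ {s t : ℝ}, 0 ≤ s → s ≤ t → t ≤ 1 →
      V t = V s + (eVariationOn f (Set.Icc s t)).toReal := by
    intro s t hs hst ht
    have hsplit := eVariationOn.Icc_add_Icc f (s := Set.Icc 0 t) (a := 0) (b := s) (c := t)
      hs hst (Set.mem_Icc.mpr ⟨hs, hst⟩)
    rw [Set.inter_eq_self_of_subset_right (Set.Icc_subset_Icc le_rfl hst),
      Set.inter_eq_self_of_subset_right (Set.Icc_subset_Icc hs le_rfl),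
      Set.inter_self] at hsplit
    rw [hVdef]
    simp only
    rw [← hsplit, ENNReal.toReal_add (hfinany le_rfl (hst.trans ht)) (hfinany hs ht)]
  intro τ hτ
  rw [Metric.continuousWithinAt_iff]
  intro ε hε
  set ε' := ENNReal.ofReal (ε / 4) with hε'
  have hε'0 : 0 < ε' := by rw [hε', ENNReal.ofReal_pos]; linarith
  have hε't : ε' ≠ ⊤ := ENNReal.ofReal_ne_top
  have h3t : (3 * ε').toReal = 3 * (ε / 4) := by
    rw [ENNReal.toReal_mul, hε', ENNReal.toReal_ofReal (by linarith : (0:ℝ) ≤ ε / 4)]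
    norm_num
  have hbd : ∀ {s t : ℝ}, 0 ≤ s → s ≤ t → t ≤ 1 →
      eVariationOn f (Set.Icc s t) ≤ 3 * ε' → dist (V t) (V s) < ε := by
    intro s t hs hst ht hvar
    rw [Real.dist_eq, hadd hs hst ht, add_sub_cancel_left,
      abs_of_nonneg ENNReal.toReal_nonneg]
    calc (eVariationOn f (Set.Icc s t)).toReal
        ≤ (3 * ε').toReal := ENNReal.toReal_mono (by simp [hε't, ENNReal.mul_ne_top]) hvar
      _ = 3 * (ε / 4) := h3t
      _ < ε := by linarith
  have hR : ∃ t₁, τ < t₁ ∧ ∀ t ∈ Set.Icc (0:ℝ) 1, τ ≤ t → t ≤ t₁ → dist (V t) (V τ) < ε := by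
    rcases eq_or_lt_of_le hτ.2 with h1 | h1
    · refine ⟨τ + 1, by linarith, fun t ht hτt htt₁ => ?_⟩
      have : t = τ := le_antisymm (h1 ▸ ht.2) hτt
      simp [this, hε]
    · obtain ⟨t₁, ht₁, hvar⟩ := var_right f h1 (hfinany hτ.1 le_rfl)
        ((hcont τ hτ).mono (Set.Icc_subset_Icc hτ.1 le_rfl)) hε'0 hε't
      refine ⟨t₁, ht₁.1, fun t ht hτt htt₁ => ?_⟩
      exact hbd hτ.1 hτt ht.2
        (le_trans (eVariationOn.mono f (Set.Icc_subset_Icc le_rfl htt₁)) hvar)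
  have hL : ∃ t₀, t₀ < τ ∧ ∀ t ∈ Set.Icc (0:ℝ) 1, t₀ ≤ t → t ≤ τ → dist (V t) (V τ) < ε := by
    rcases (eq_or_lt_of_le hτ.1) with h1 | h1
    · refine ⟨τ - 1, by linarith, fun t ht ht₀t htτ => ?_⟩
      have : t = τ := le_antisymm htτ (h1 ▸ ht.1)
      simp [this, hε]
    · obtain ⟨t₀, ht₀, hvar⟩ := var_left f h1 (hfinany le_rfl hτ.2)
        ((hcont τ hτ).mono (Set.Icc_subset_Icc le_rfl hτ.2)) hε'0 hε't
      refine ⟨t₀, ht₀.2, fun t ht ht₀t htτ => ?_⟩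
      rw [dist_comm]
      exact hbd ht.1 htτ hτ.2
        (le_trans (eVariationOn.mono f (Set.Icc_subset_Icc ht₀t le_rfl)) hvar)
  obtain ⟨t₁, ht₁, hRb⟩ := hR
  obtain ⟨t₀, ht₀, hLb⟩ := hL
  refine ⟨min (t₁ - τ) (τ - t₀), by simp [ht₁, ht₀, sub_pos], fun t ht hdist => ?_⟩
  rw [Real.dist_eq] at hdist
  rcases le_total τ t with h | h
  · apply hRb t ht h
    have h1 : |t - τ| < t₁ - τ := lt_of_lt_of_le hdist (min_le_left _ _)
    rw [abs_of_nonneg (by linarith)] at h1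
    linarith
  · apply hLb t ht ?_ h
    have h1 : |t - τ| < τ - t₀ := lt_of_lt_of_le hdist (min_le_right _ _)
    rw [abs_of_nonpos (by linarith)] at h1
    linarith

theorem stmt1 (γ : ℝ → EuclideanSpace ℝ (Fin 2))
    (hcont : ContinuousOn γ (Set.Icc 0 1))
    (ℓ T : ℝ)
    (hlen : eVariationOn γ (Set.Icc 0 1) = ENNReal.ofReal ℓ)
    (hl4 : 4 ≤ ℓ) (hT1 : 1 ≤ T) (hT2 : T ≤ ℓ / 4) :
    ((Set.ncard {x : ℤ × ℤ | Metric.infDist (e2 x) (γ '' Set.Icc 0 1) ≤ T}) : ℝ)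
      ≤ 25 * T * ℓ := by
  have hT0 : (0:ℝ) < T := by linarith
  have hfin : eVariationOn γ (Set.Icc 0 1) ≠ ⊤ := by rw [hlen]; exact ENNReal.ofReal_ne_top
  set V : ℝ → ℝ := fun t => (eVariationOn γ (Set.Icc 0 t)).toReal with hVdef
  have hV1 : V 1 = ℓ := by
    rw [hVdef]; simp only; rw [hlen, ENNReal.toReal_ofReal (by linarith)]
  have hV0 : V 0 = 0 := by
    rw [hVdef]; simp only [Set.Icc_self]
    rw [eVariationOn.subsingleton γ Set.subsingleton_singleton]
    simp
  have hfinany : ∀ {s t : ℝ}, 0 ≤ s → t ≤ 1 → eVariationOn γ (Set.Icc s t) ≠ ⊤ := by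
    intro s t hs ht h
    exact hfin (top_le_iff.mp (h ▸ eVariationOn.mono γ (Set.Icc_subset_Icc hs ht)))
  have hadd : ∀ {s t : ℝ}, 0 ≤ s → s ≤ t → t ≤ 1 →
      V t = V s + (eVariationOn γ (Set.Icc s t)).toReal := by
    intro s t hs hst ht
    have hsplit := eVariationOn.Icc_add_Icc γ (s := Set.Icc 0 t) (a := 0) (b := s) (c := t)
      hs hst (Set.mem_Icc.mpr ⟨hs, hst⟩)
    rw [Set.inter_eq_self_of_subset_right (Set.Icc_subset_Icc le_rfl hst),
      Set.inter_eq_self_of_subset_right (Set.Icc_subset_Icc hs le_rfl),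
      Set.inter_self] at hsplit
    rw [hVdef]
    simp only
    rw [← hsplit, ENNReal.toReal_add (hfinany le_rfl (hst.trans ht)) (hfinany hs ht)]
  have hVmono : ∀ {s t : ℝ}, 0 ≤ s → s ≤ t → t ≤ 1 → V s ≤ V t := by
    intro s t hs hst ht
    rw [hadd hs hst ht]
    exact le_add_of_nonneg_right ENNReal.toReal_nonneg
  have hdistV : ∀ {s t : ℝ}, 0 ≤ s → s ≤ t → t ≤ 1 → dist (γ s) (γ t) ≤ V t - V s := by
    intro s t hs hst ht
    have hbv : BoundedVariationOn γ (Set.Icc s t) := hfinany hs ht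
    have := hbv.dist_le (Set.mem_Icc.mpr ⟨le_rfl, hst⟩) (Set.mem_Icc.mpr ⟨hst, le_rfl⟩)
    rw [hadd hs hst ht]
    linarith
  -- IVT : choose midpoints
  have hVconn := intermediate_value_Icc (zero_le_one (α := ℝ))
    (variation_fun_continuousOn γ hcont hfin)
  have hc : ∀ i : ℕ, ∃ c ∈ Set.Icc (0:ℝ) 1, V c = min ((2*(i:ℝ)+1)*T) ℓ := by
    intro i
    have hmem : min ((2*(i:ℝ)+1)*T) ℓ ∈ Set.Icc (V 0) (V 1) := by
      rw [hV0, hV1, Set.mem_Icc]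
      refine ⟨le_min (by positivity) (by linarith), min_le_right _ _⟩
    obtain ⟨cc, hc1, hc2⟩ := hVconn hmem
    exact ⟨cc, hc1, hc2⟩
  choose c hcmem hcval using hc
  set N : ℕ := ⌊ℓ / (2*T)⌋₊ + 1 with hNdef
  have hK : IsCompact (γ '' Set.Icc 0 1) := isCompact_Icc.image_of_continuousOn hcont
  have hKne : (γ '' Set.Icc 0 1).Nonempty :=
    ⟨γ 0, Set.mem_image_of_mem _ (Set.mem_Icc.mpr ⟨le_rfl, zero_le_one⟩)⟩
  have hcoord : ∀ (a b : EuclideanSpace ℝ (Fin 2)) (j : Fin 2), |a j - b j| ≤ dist a b := by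
    intro a b j
    have h1 : dist (a j) (b j) ^ 2 ≤ ∑ i, dist (a i) (b i) ^ 2 :=
      Finset.single_le_sum (f := fun i => dist (a i) (b i) ^ 2) (fun i _ => sq_nonneg _) (Finset.mem_univ j)
    calc |a j - b j| = dist (a j) (b j) := (Real.dist_eq _ _).symm
      _ = Real.sqrt (dist (a j) (b j) ^ 2) := (Real.sqrt_sq dist_nonneg).symm
      _ ≤ Real.sqrt (∑ i, dist (a i) (b i) ^ 2) := Real.sqrt_le_sqrt h1
      _ = dist a b := (EuclideanSpace.dist_eq a b).symm
  set Box : ℕ → Finset (ℤ × ℤ) := fun i =>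
    Finset.Icc (⌈γ (c i) 0 - 2*T⌉, ⌈γ (c i) 1 - 2*T⌉) (⌊γ (c i) 0 + 2*T⌋, ⌊γ (c i) 1 + 2*T⌋)
    with hBoxdef
  set F : Finset (ℤ × ℤ) := (Finset.range N).biUnion Box with hFdef
  have hsubset : {x : ℤ × ℤ | Metric.infDist (e2 x) (γ '' Set.Icc 0 1) ≤ T} ⊆ ↑F := by
    intro x hx
    simp only [Set.mem_setOf_eq] at hx
    obtain ⟨y, hyK, hyd⟩ := hK.exists_infDist_eq_dist hKne (e2 x)
    obtain ⟨t, htmem, rfl⟩ := hyK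
    rw [Set.mem_Icc] at htmem
    have hdxy : dist (e2 x) (γ t) ≤ T := by rw [← hyd]; exact hx
    set i := ⌊V t / (2*T)⌋₊ with hidef
    have hVt0 : 0 ≤ V t := ENNReal.toReal_nonneg
    have hVtℓ : V t ≤ ℓ := by rw [← hV1]; exact hVmono htmem.1 htmem.2 le_rfl
    have hiN : i < N := by
      have h1 : ⌊V t / (2*T)⌋₊ ≤ ⌊ℓ / (2*T)⌋₊ := Nat.floor_le_floor (by gcongr)
      omega
    have hfloor1 : 2*T*(i:ℝ) ≤ V t := by
      have h1 : (i:ℝ) ≤ V t / (2*T) := Nat.floor_le (by positivity)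
      have h2 := (le_div_iff₀ (by positivity : (0:ℝ) < 2*T)).mp h1
      linarith
    have hfloor2 : V t < 2*T*((i:ℝ)+1) := by
      have h1 : V t / (2*T) < (i:ℝ) + 1 := Nat.lt_floor_add_one _
      have h2 := (div_lt_iff₀ (by positivity : (0:ℝ) < 2*T)).mp h1
      linarith
    have hmid : |V t - V (c i)| ≤ T := by
      rw [hcval i]
      rcases le_total ((2*(i:ℝ)+1)*T) ℓ with hcase | hcase
      · rw [min_eq_left hcase, abs_le]
        constructor <;> nlinarith
      · rw [min_eq_right hcase, abs_le]
        constructor <;> nlinarith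
    have hgd : dist (γ t) (γ (c i)) ≤ T := by
      have habs := abs_le.mp hmid
      rcases le_total t (c i) with hcase | hcase
      · have := hdistV htmem.1 hcase (hcmem i).2
        have hmono := hVmono htmem.1 hcase (hcmem i).2
        linarith [this, habs.1]
      · rw [dist_comm]
        have := hdistV (hcmem i).1 hcase htmem.2
        linarith [this, habs.2]
    have hdxc : dist (e2 x) (γ (c i)) ≤ 2*T := by
      calc dist (e2 x) (γ (c i)) ≤ dist (e2 x) (γ t) + dist (γ t) (γ (c i)) := dist_triangle _ _ _
        _ ≤ 2*T := by linarith
    have he0 : e2 x 0 = (x.1 : ℝ) := rfl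
    have he1 : e2 x 1 = (x.2 : ℝ) := rfl
    have hb0 : |(x.1:ℝ) - γ (c i) 0| ≤ 2*T := by
      rw [← he0]; exact le_trans (hcoord _ _ 0) hdxc
    have hb1 : |(x.2:ℝ) - γ (c i) 1| ≤ 2*T := by
      rw [← he1]; exact le_trans (hcoord _ _ 1) hdxc
    have habs0 := abs_le.mp hb0
    have habs1 := abs_le.mp hb1
    have hboxmem : x ∈ Box i := by
      rw [hBoxdef]
      simp only [Finset.mem_Icc, Prod.mk_le_mk]
      refine ⟨⟨?_, ?_⟩, ?_, ?_⟩
      · exact Int.ceil_le.mpr (by push_cast; linarith [habs0.2])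
      · exact Int.ceil_le.mpr (by push_cast; linarith [habs1.2])
      · exact Int.le_floor.mpr (by push_cast; linarith [habs0.1])
      · exact Int.le_floor.mpr (by push_cast; linarith [habs1.1])
    exact Finset.mem_coe.mpr (Finset.mem_biUnion.mpr ⟨i, Finset.mem_range.mpr hiN, hboxmem⟩)
  have hncard : (Set.ncard {x : ℤ × ℤ | Metric.infDist (e2 x) (γ '' Set.Icc 0 1) ≤ T} : ℝ)
      ≤ (F.card : ℝ) := by
    have h1 := Set.ncard_le_ncard hsubset (Finset.finite_toSet F)
    rw [Set.ncard_coe_finset] at h1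
    exact_mod_cast h1
  have hboxcard : ∀ i : ℕ, ((Box i).card : ℝ) ≤ (4*T+1)^2 := by
    intro i
    have key : ∀ g : ℝ, (((⌊g + 2*T⌋ + 1 - ⌈g - 2*T⌉).toNat : ℕ) : ℝ) ≤ 4*T + 1 := by
      intro g
      have h1 : (⌊g + 2*T⌋ : ℝ) ≤ g + 2*T := Int.floor_le _
      have h2 : g - 2*T ≤ (⌈g - 2*T⌉ : ℝ) := Int.le_ceil _
      rcases le_or_gt (⌊g + 2*T⌋ + 1 - ⌈g - 2*T⌉) 0 with h | h
      · rw [Int.toNat_of_nonpos h]; push_cast; linarith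
      · have h3 : ((⌊g + 2*T⌋ + 1 - ⌈g - 2*T⌉).toNat : ℤ) = ⌊g + 2*T⌋ + 1 - ⌈g - 2*T⌉ :=
          Int.toNat_of_nonneg h.le
        have h4 : (((⌊g + 2*T⌋ + 1 - ⌈g - 2*T⌉).toNat : ℕ) : ℝ)
            = ((⌊g + 2*T⌋ : ℝ) + 1 - (⌈g - 2*T⌉ : ℝ)) := by
          exact_mod_cast congrArg (fun z : ℤ => (z : ℝ)) h3
        rw [h4]; linarith
    rw [hBoxdef]
    simp only
    rw [Finset.card_Icc_prod]
    simp only [Int.card_Icc]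
    push_cast
    have k0 := key (γ (c i) 0)
    have k1 := key (γ (c i) 1)
    have n0 : (0:ℝ) ≤ ((⌊γ (c i) 0 + 2*T⌋ + 1 - ⌈γ (c i) 0 - 2*T⌉).toNat : ℝ) := Nat.cast_nonneg _
    have n1 : (0:ℝ) ≤ ((⌊γ (c i) 1 + 2*T⌋ + 1 - ⌈γ (c i) 1 - 2*T⌉).toNat : ℝ) := Nat.cast_nonneg _
    nlinarith [k0, k1, n0, n1]
  have hFcard : (F.card : ℝ) ≤ (N : ℝ) * (4*T+1)^2 := by
    have h1 : F.card ≤ ∑ i ∈ Finset.range N, (Box i).card := Finset.card_biUnion_le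
    have h2 : ((∑ i ∈ Finset.range N, (Box i).card : ℕ) : ℝ)
        = ∑ i ∈ Finset.range N, ((Box i).card : ℝ) := by push_cast; rfl
    calc (F.card : ℝ) ≤ ∑ i ∈ Finset.range N, ((Box i).card : ℝ) := by
          rw [← h2]; exact_mod_cast h1
      _ ≤ ∑ _i ∈ Finset.range N, (4*T+1)^2 := Finset.sum_le_sum (fun i _ => hboxcard i)
      _ = (N : ℝ) * (4*T+1)^2 := by rw [Finset.sum_const, Finset.card_range]; simp [nsmul_eq_mul]
  -- final arithmetic
  have hF0 : (⌊ℓ / (2*T)⌋₊ : ℝ) * (2*T) ≤ ℓ := by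
    have h1 : (⌊ℓ / (2*T)⌋₊ : ℝ) ≤ ℓ / (2*T) := Nat.floor_le (by positivity)
    exact (le_div_iff₀ (by positivity : (0:ℝ) < 2*T)).mp h1
  have hNr : (N : ℝ) = (⌊ℓ / (2*T)⌋₊ : ℝ) + 1 := by rw [hNdef]; push_cast; ring
  have hfinal : (N : ℝ) * (4*T+1)^2 ≤ 25 * T * ℓ := by
    rw [hNr]
    set F0 : ℝ := (⌊ℓ / (2*T)⌋₊ : ℝ) with hF0def
    have hF0nn : 0 ≤ F0 := Nat.cast_nonneg _
    nlinarith [hF0, hF0nn, hT1, hl4, hT2, sq_nonneg (T-1), mul_le_mul_of_nonneg_left hT2 hF0nn,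
      mul_le_mul_of_nonneg_left hT2 (by positivity : (0:ℝ) ≤ 25*T)]
  calc (Set.ncard {x : ℤ × ℤ | Metric.infDist (e2 x) (γ '' Set.Icc 0 1) ≤ T} : ℝ)
      ≤ (F.card : ℝ) := hncard
    _ ≤ (N : ℝ) * (4*T+1)^2 := hFcard
    _ ≤ 25 * T * ℓ := hfinal
end
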